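/- arXiv:2306.05214 — 3 statements merged into one kernel-verified Lean document; each statement's English description precedes it below -/
import Mathlib

section
/- Every composant of an indecomposable continuum X is a meager subset of X. -/
open Set TopologicalSpace

/-- In a connected space, if `Bᶜ = C ∪ A` with `C` a closed preconnected nonempty set and
`A, B` open, then `Bᶜ` is preconnected. -/
lemma conn_aux {X : Type*} [TopologicalSpace X] [PreconnectedSpace X] {C A B : Set X}
    (hC : IsClosed C) (hCc : IsPreconnected C) (hCne : C.Nonempty)
    (hA : IsOpen A) (hB : IsOpen B) (hBc : Bᶜ = C ∪ A) : IsPreconnected Bᶜ := by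
  rw [isPreconnected_iff_subset_of_fully_disjoint_closed hB.isClosed_compl]
  have key : ∀ t1 t2 : Set X, IsClosed t1 → IsClosed t2 → Bᶜ ⊆ t1 ∪ t2 →
      Disjoint t1 t2 → C ⊆ t1 → Bᶜ ⊆ t1 := by
    intro t1 t2 ht1 ht2 hcov hd hCt
    have hQeq : Bᶜ ∩ t2 = A ∩ t1ᶜ := by
      apply subset_antisymm
      · intro x ⟨hx1, hx2⟩
        have hxt1 : x ∉ t1 := fun h => hd.ne_of_mem h hx2 rfl
        rw [hBc] at hx1
        rcases hx1 with h | h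
        · exact absurd (hCt h) hxt1
        · exact ⟨h, hxt1⟩
      · intro x ⟨hxA, hxt1⟩
        have hxB : x ∈ Bᶜ := by rw [hBc]; exact Or.inr hxA
        rcases hcov hxB with h | h
        · exact absurd h hxt1
        · exact ⟨hxB, h⟩
    have hclopen : IsClopen (Bᶜ ∩ t2) := by
      constructor
      · exact hB.isClosed_compl.inter ht2
      · rw [hQeq]; exact hA.inter ht1.isOpen_compl
    rcases isClopen_iff.mp hclopen with h | h
    · intro x hx
      rcases hcov hx with h1 | h2
      · exact h1
      · exact absurd (show x ∈ Bᶜ ∩ t2 from ⟨hx, h2⟩) (by rw [h]; exact notMem_empty x)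
    · obtain ⟨c, hc⟩ := hCne
      have : c ∈ Bᶜ ∩ t2 := by rw [h]; trivial
      rw [hQeq] at this
      exact absurd (hCt hc) this.2
  intro t1 t2 ht1 ht2 hcov hd
  have hCsub : C ⊆ t1 ∪ t2 := fun x hx => hcov (by rw [hBc]; exact Or.inl hx)
  rcases (isPreconnected_iff_subset_of_fully_disjoint_closed hC).mp hCc t1 t2 ht1 ht2 hCsub hd with
    h | h
  · exact Or.inl (key t1 t2 ht1 ht2 hcov hd h)
  · exact Or.inr (key t2 t1 ht2 ht1 (by rwa [union_comm] at hcov) hd.symm h)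

/-- In an indecomposable continuum, every proper subcontinuum has empty interior. -/
lemma proper_subcontinuum_empty_interior {X : Type*} [TopologicalSpace X] [CompactSpace X]
    [ConnectedSpace X] [T2Space X]
    (hind : ∀ C D : Set X, IsCompact C → IsConnected C → C ≠ Set.univ →
      IsCompact D → IsConnected D → D ≠ Set.univ → C ∪ D ≠ Set.univ)
    {C : Set X} (hCcomp : IsCompact C) (hCconn : IsConnected C) (hCprop : C ≠ Set.univ) :
    interior C = ∅ := by
  by_contra hne
  obtain ⟨x, hx⟩ := nonempty_iff_ne_empty.mpr hne
  have hCcl : IsClosed C := hCcomp.isClosed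
  have hCcne : Cᶜ.Nonempty := nonempty_compl.mpr hCprop
  by_cases hpc : IsPreconnected Cᶜ
  · -- complement connected: X = C ∪ closure Cᶜ
    have hD : IsCompact (closure Cᶜ) := isClosed_closure.isCompact
    have hDconn : IsConnected (closure Cᶜ) := ⟨hCcne.closure, hpc.closure⟩
    have hDprop : closure Cᶜ ≠ Set.univ := by
      intro h
      have : x ∈ closure Cᶜ := h ▸ mem_univ x
      rw [closure_compl] at this
      exact this hx
    exact hind C (closure Cᶜ) hCcomp hCconn hCprop hD hDconn hDprop
      (eq_univ_of_univ_subset (by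
        rw [← union_compl_self C]
        exact union_subset_union_right C subset_closure))
  · -- complement disconnected
    rw [IsPreconnected] at hpc
    push_neg at hpc
    obtain ⟨u, v, hu, hv, hcov, hAne, hBne, hsep⟩ := hpc
    set A := Cᶜ ∩ u with hAdef
    set B := Cᶜ ∩ v with hBdef
    have hABempty : A ∩ B = ∅ := by
      rw [← not_nonempty_iff_eq_empty]
      intro ⟨y, hy⟩
      exact absurd (show y ∈ Cᶜ ∩ (u ∩ v) from ⟨hy.1.1, hy.1.2, hy.2.2⟩)
        (by rw [hsep]; exact notMem_empty y)
    have hAopen : IsOpen A := (hCcl.isOpen_compl).inter hu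
    have hBopen : IsOpen B := (hCcl.isOpen_compl).inter hv
    have hBcomp : Bᶜ = C ∪ A := by
      ext y
      simp only [mem_compl_iff, mem_union, hBdef, mem_inter_iff, not_and]
      constructor
      · intro h
        by_cases hyC : y ∈ C
        · exact Or.inl hyC
        · refine Or.inr ⟨hyC, ?_⟩
          rcases hcov hyC with h1 | h2
          · exact h1
          · exact absurd h2 (h hyC)
      · rintro (h | ⟨hyC, hyu⟩)
        · intro hyC; exact absurd h hyC
        · intro _ hyv; exact absurd (show y ∈ A ∩ B from ⟨⟨hyC, hyu⟩, hyC, hyv⟩)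
            (by rw [hABempty]; exact notMem_empty y)
    have hAcomp : Aᶜ = C ∪ B := by
      ext y
      simp only [mem_compl_iff, mem_union, hAdef, mem_inter_iff, not_and]
      constructor
      · intro h
        by_cases hyC : y ∈ C
        · exact Or.inl hyC
        · refine Or.inr ⟨hyC, ?_⟩
          rcases hcov hyC with h1 | h2
          · exact absurd h1 (h hyC)
          · exact h2
      · rintro (h | ⟨hyC, hyv⟩)
        · intro hyC; exact absurd h hyC
        · intro _ hyu; exact absurd (show y ∈ A ∩ B from ⟨⟨hyC, hyu⟩, hyC, hyv⟩)
            (by rw [hABempty]; exact notMem_empty y)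
    have h1 : IsPreconnected Bᶜ :=
      conn_aux hCcl hCconn.isPreconnected hCconn.nonempty hAopen hBopen hBcomp
    have h2 : IsPreconnected Aᶜ :=
      conn_aux hCcl hCconn.isPreconnected hCconn.nonempty hBopen hAopen hAcomp
    have hBcne : Bᶜ ≠ Set.univ := by
      obtain ⟨b, hb1, hb2⟩ := hBne
      intro h
      have : b ∈ Bᶜ := h ▸ mem_univ b
      exact this ⟨hb1, hb2⟩
    have hAcne : Aᶜ ≠ Set.univ := by
      obtain ⟨a, ha1, ha2⟩ := hAne
      intro h
      have : a ∈ Aᶜ := h ▸ mem_univ a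
      exact this ⟨ha1, ha2⟩
    have hCBc : C ⊆ Bᶜ := hBcomp ▸ subset_union_left
    have hCAc : C ⊆ Aᶜ := hAcomp ▸ subset_union_left
    apply hind Bᶜ Aᶜ hBopen.isClosed_compl.isCompact ⟨hCconn.nonempty.mono hCBc, h1⟩ hBcne
      hAopen.isClosed_compl.isCompact ⟨hCconn.nonempty.mono hCAc, h2⟩ hAcne
    rw [← compl_inter, show B ∩ A = ∅ by rw [inter_comm]; exact hABempty, compl_empty]

/-- Every composant of an indecomposable continuum is a meager subset. -/
theorem composant_of_indecomposable_meager (X : Type*) [MetricSpace X] [CompactSpace X]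
    [ConnectedSpace X] [Nonempty X]
    (hind : ∀ C D : Set X, IsCompact C → IsConnected C → C ≠ Set.univ →
      IsCompact D → IsConnected D → D ≠ Set.univ → C ∪ D ≠ Set.univ)
    (p : X) :
    IsMeagre {q : X | ∃ C : Set X, IsCompact C ∧ IsConnected C ∧ C ≠ Set.univ ∧
      p ∈ C ∧ q ∈ C} := by
  rw [isMeagre_iff_countable_union_isNowhereDense]
  set F : Set X → Set X := fun U =>
    closure (⋃₀ {C : Set X | IsCompact C ∧ IsConnected C ∧ p ∈ C ∧ C ∩ U = ∅}) with hF
  refine ⟨F '' countableBasis X, ?_, (countable_countableBasis X).image F, ?_⟩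
  · rintro t ⟨U, hU, rfl⟩
    have hUopen : IsOpen U := (isBasis_countableBasis X).isOpen hU
    have hUne : U.Nonempty := nonempty_iff_ne_empty.mpr
      (fun h => empty_notMem_countableBasis X (h ▸ hU))
    set G := ⋃₀ {C : Set X | IsCompact C ∧ IsConnected C ∧ p ∈ C ∧ C ∩ U = ∅} with hG
    have hGU : G ⊆ Uᶜ := by
      rintro y ⟨C, ⟨_, _, _, hCU⟩, hyC⟩
      intro hyU
      exact absurd (show y ∈ C ∩ U from ⟨hyC, hyU⟩) (by rw [hCU]; exact notMem_empty y)
    have hclGU : closure G ⊆ Uᶜ := closure_minimal hGU hUopen.isClosed_compl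
    rcases eq_empty_or_nonempty G with h | h
    · show IsNowhereDense (closure G)
      rw [h, closure_empty]
      exact isNowhereDense_empty
    · have hGconn : IsPreconnected G := isPreconnected_sUnion p _
        (fun s hs => hs.2.2.1) (fun s hs => hs.2.1.isPreconnected)
      have hclcomp : IsCompact (closure G) := isClosed_closure.isCompact
      have hclconn : IsConnected (closure G) := ⟨h.closure, hGconn.closure⟩
      have hclprop : closure G ≠ univ := by
        intro heq
        obtain ⟨y, hy⟩ := hUne
        exact (heq ▸ hclGU) (mem_univ y) hy
      have := proper_subcontinuum_empty_interior hind hclcomp hclconn hclprop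
      show IsNowhereDense (closure G)
      rw [IsNowhereDense, closure_closure]
      exact this
  · rintro q ⟨C, hCcomp, hCconn, hCprop, hpC, hqC⟩
    have hCcne : Cᶜ.Nonempty := nonempty_compl.mpr hCprop
    obtain ⟨U, hUB, hUne, hUsub⟩ := (isBasis_countableBasis X).exists_nonempty_subset hCcne
      hCcomp.isClosed.isOpen_compl
    refine ⟨F U, ⟨U, hUB, rfl⟩, ?_⟩
    apply subset_closure
    exact ⟨C, ⟨hCcomp, hCconn, hpC, by
      rw [← not_nonempty_iff_eq_empty]
      rintro ⟨y, hy1, hy2⟩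
      exact hUsub hy2 hy1⟩, hqC⟩
end

section
/- For any positive integer N and positive integer k, the cyclic subgroup of the torus (ℝ/ℤ)^k generated by the element x = (1/N, 1/N², …, 1/N^k) meets every cube of the 1/N-grid; in particular, it is a (√k/N)-net in (ℝ/ℤ)^k with the Euclidean (or sup) metric. -/
open Finset in
private lemma geom_bound_aux (N : ℕ) (j' : ℕ → ℕ) (hj : ∀ l, j' l < N) :
    ∀ n : ℕ, (∑ l ∈ Finset.range n, j' l * N ^ l) + 1 ≤ N ^ n := by
  intro n
  induction n with
  | zero => simp
  | succ n ih =>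
    rw [Finset.sum_range_succ, pow_succ]
    calc (∑ l ∈ Finset.range n, j' l * N ^ l) + j' n * N ^ n + 1
        = ((∑ l ∈ Finset.range n, j' l * N ^ l) + 1) + j' n * N ^ n := by ring
      _ ≤ N ^ n + j' n * N ^ n := by omega
      _ = (1 + j' n) * N ^ n := by ring
      _ ≤ N * N ^ n := by
          have := hj n
          exact Nat.mul_le_mul_right _ (by omega)
      _ = N ^ n * N := by ring

private lemma norm_addCircle_le (x : ℝ) : ‖(x : AddCircle (1 : ℝ))‖ ≤ |x| := by
  rw [AddCircle.norm_eq]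
  simpa using round_le x 0

private lemma part1 (k N : ℕ) (hN : 0 < N) (j : Fin k → ℕ) (hj : ∀ i, j i < N) :
    ∃ m : ℤ, ∀ i : Fin k, ∃ t : ℝ,
        (j i : ℝ) / N ≤ t ∧ t ≤ ((j i : ℝ) + 1) / N ∧
        m • ((((1 : ℝ) / N ^ ((i : ℕ) + 1)) : ℝ) : AddCircle (1 : ℝ)) = (t : AddCircle (1 : ℝ)) := by
  classical
  set j' : ℕ → ℕ := fun l => if h : l < k then j ⟨l, h⟩ else 0 with hj'def
  have hj' : ∀ l, j' l < N := by
    intro l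
    by_cases h : l < k
    · simpa [hj'def, h] using hj ⟨l, h⟩
    · simpa [hj'def, h] using hN
  refine ⟨((∑ l ∈ Finset.range k, j' l * N ^ l : ℕ) : ℤ), fun i => ?_⟩
  set S : ℕ := ∑ l ∈ Finset.range ((i : ℕ) + 1), j' l * N ^ l with hS
  set T : ℕ := ∑ l ∈ Finset.Ico ((i : ℕ) + 1) k, j' l * N ^ l with hT
  have hMT : (∑ l ∈ Finset.range k, j' l * N ^ l : ℕ) = S + T := by
    rw [hS, hT, Finset.range_eq_Ico, Finset.range_eq_Ico]
    exact (Finset.sum_Ico_consecutive (fun l => j' l * N ^ l) (show 0 ≤ (i : ℕ) + 1 by omega) (show (i : ℕ) + 1 ≤ k by have := i.isLt; omega)).symm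
  have hdvd : (N ^ ((i : ℕ) + 1) : ℕ) ∣ T := by
    refine Finset.dvd_sum fun l hl => ?_
    rw [Finset.mem_Ico] at hl
    exact Dvd.dvd.mul_left (pow_dvd_pow N hl.1) _
  obtain ⟨d, hd⟩ := hdvd
  have hNpos : (0 : ℝ) < (N : ℝ) ^ ((i : ℕ) + 1) := by positivity
  have hNR : (0 : ℝ) < (N : ℝ) := by exact_mod_cast hN
  refine ⟨(S : ℝ) / (N : ℝ) ^ ((i : ℕ) + 1), ?_, ?_, ?_⟩
  · -- lower bound
    have h1 : j i * N ^ (i : ℕ) ≤ S := by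
      have : j' (i : ℕ) * N ^ (i : ℕ) ≤ S :=
        Finset.single_le_sum (f := fun l => j' l * N ^ l) (fun _ _ => Nat.zero_le _)
          (Finset.self_mem_range_succ (i : ℕ))
      simpa [hj'def, i.isLt] using this
    rw [div_le_div_iff₀ hNR hNpos]
    have : (j i : ℝ) * (N : ℝ) ^ (i : ℕ) ≤ (S : ℝ) := by exact_mod_cast h1
    calc (j i : ℝ) * (N : ℝ) ^ ((i : ℕ) + 1) = ((j i : ℝ) * (N : ℝ) ^ (i : ℕ)) * N := by ring
      _ ≤ (S : ℝ) * N := by nlinarith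
  · -- upper bound
    have h2 : S ≤ (j i + 1) * N ^ (i : ℕ) := by
      rw [hS, Finset.sum_range_succ]
      have hg := geom_bound_aux N j' hj' (i : ℕ)
      have : j' (i : ℕ) = j i := by simp [hj'def, i.isLt]
      rw [this]
      calc (∑ l ∈ Finset.range (i : ℕ), j' l * N ^ l) + j i * N ^ (i : ℕ)
          ≤ N ^ (i : ℕ) + j i * N ^ (i : ℕ) := by omega
        _ = (j i + 1) * N ^ (i : ℕ) := by ring
    rw [div_le_div_iff₀ hNpos hNR]
    have : (S : ℝ) ≤ ((j i : ℝ) + 1) * (N : ℝ) ^ (i : ℕ) := by exact_mod_cast h2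
    calc (S : ℝ) * N ≤ (((j i : ℝ) + 1) * (N : ℝ) ^ (i : ℕ)) * N := by nlinarith
      _ = ((j i : ℝ) + 1) * (N : ℝ) ^ ((i : ℕ) + 1) := by ring
  · -- AddCircle equality
    rw [← QuotientAddGroup.mk_zsmul, QuotientAddGroup.eq_iff_sub_mem]
    have key : (((∑ l ∈ Finset.range k, j' l * N ^ l : ℕ) : ℤ) : ℝ) •
        ((1 : ℝ) / (N : ℝ) ^ ((i : ℕ) + 1)) - (S : ℝ) / (N : ℝ) ^ ((i : ℕ) + 1) = (d : ℝ) := by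
      rw [smul_eq_mul]
      have hMT' : ((∑ l ∈ Finset.range k, j' l * N ^ l : ℕ) : ℝ) = (S : ℝ) + (T : ℝ) := by
        exact_mod_cast hMT
      have hd' : (T : ℝ) = (N : ℝ) ^ ((i : ℕ) + 1) * (d : ℝ) := by exact_mod_cast hd
      push_cast
      push_cast at hMT'
      rw [hMT', hd']
      field_simp
      ring
    have : ((∑ l ∈ Finset.range k, j' l * N ^ l : ℕ) : ℤ) •
        ((1 : ℝ) / (N : ℝ) ^ ((i : ℕ) + 1)) - (S : ℝ) / (N : ℝ) ^ ((i : ℕ) + 1) = (d : ℝ) := by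
      rw [zsmul_eq_mul]
      rw [smul_eq_mul] at key
      exact_mod_cast key
    rw [this]
    rw [AddSubgroup.mem_zmultiples_iff]
    exact ⟨(d : ℤ), by simp⟩

/-- The cyclic subgroup of `(ℝ/ℤ)^k` generated by `x = (1/N, 1/N², …, 1/N^k)` meets every
cube of the `1/N`-grid; in particular it is a `√k/N`-net for the sup metric. -/
theorem cyclic_net_in_torus (k N : ℕ) (hk : 0 < k) (hN : 0 < N) :
    (∀ j : Fin k → ℕ, (∀ i, j i < N) →
      ∃ m : ℤ, ∀ i : Fin k, ∃ t : ℝ,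
        (j i : ℝ) / N ≤ t ∧ t ≤ ((j i : ℝ) + 1) / N ∧
        m • ((((1 : ℝ) / N ^ ((i : ℕ) + 1)) : ℝ) : AddCircle (1 : ℝ)) = (t : AddCircle (1 : ℝ))) ∧
    (∀ y : Fin k → AddCircle (1 : ℝ), ∃ m : ℤ,
      dist y (fun i => m • ((((1 : ℝ) / N ^ ((i : ℕ) + 1)) : ℝ) : AddCircle (1 : ℝ)))
        ≤ Real.sqrt k / N) := by
  constructor
  · exact fun j hj => part1 k N hN j hj
  · intro y
    have hNR : (0 : ℝ) < (N : ℝ) := by exact_mod_cast hN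
    -- choose representatives in [0,1)
    have hrep : ∀ i : Fin k, ∃ a : ℝ, 0 ≤ a ∧ a < 1 ∧ ((a : ℝ) : AddCircle (1 : ℝ)) = y i := by
      intro i
      induction y i using QuotientAddGroup.induction_on with
      | H x =>
        refine ⟨Int.fract x, Int.fract_nonneg x, Int.fract_lt_one x, ?_⟩
        rw [QuotientAddGroup.eq_iff_sub_mem, AddSubgroup.mem_zmultiples_iff]
        refine ⟨-⌊x⌋, ?_⟩
        rw [Int.fract, zsmul_eq_mul]
        push_cast
        ring
    choose a ha0 ha1 hay using hrep
    set j : Fin k → ℕ := fun i => ⌊a i * N⌋.toNat with hjdef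
    have hj_le : ∀ i, (j i : ℝ) ≤ a i * N := by
      intro i
      have h0 : (0 : ℤ) ≤ ⌊a i * N⌋ := Int.floor_nonneg.mpr (mul_nonneg (ha0 i) (by positivity))
      have : ((j i : ℤ) : ℝ) ≤ a i * N := by
        rw [hjdef]; simp only [Int.toNat_of_nonneg h0]; exact Int.floor_le _
      exact_mod_cast this
    have hj_lt : ∀ i, a i * N < (j i : ℝ) + 1 := by
      intro i
      have h0 : (0 : ℤ) ≤ ⌊a i * N⌋ := Int.floor_nonneg.mpr (mul_nonneg (ha0 i) (by positivity))
      have : a i * N < ((j i : ℤ) : ℝ) + 1 := by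
        rw [hjdef]; simp only [Int.toNat_of_nonneg h0]; exact Int.lt_floor_add_one _
      exact_mod_cast this
    have hjN : ∀ i, j i < N := by
      intro i
      have h1 : a i * N < N := by nlinarith [ha1 i, ha0 i]
      have := (hj_le i).trans_lt h1
      exact_mod_cast this
    obtain ⟨m, hm⟩ := part1 k N hN j hjN
    refine ⟨m, ?_⟩
    have hsk : (1 : ℝ) ≤ Real.sqrt k := by
      rw [show (1 : ℝ) = Real.sqrt 1 by simp]
      exact Real.sqrt_le_sqrt (by exact_mod_cast hk)
    have hbound : (0 : ℝ) ≤ Real.sqrt k / N := by positivity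
    rw [dist_pi_le_iff hbound]
    intro i
    obtain ⟨t, ht1, ht2, ht3⟩ := hm i
    have hai1 : (j i : ℝ) / N ≤ a i := by
      rw [div_le_iff₀ hNR]; exact hj_le i
    have hai2 : a i ≤ ((j i : ℝ) + 1) / N := by
      rw [le_div_iff₀ hNR]; exact (hj_lt i).le
    calc dist (y i) (m • ((((1 : ℝ) / N ^ ((i : ℕ) + 1)) : ℝ) : AddCircle (1 : ℝ)))
        = ‖((a i - t : ℝ) : AddCircle (1 : ℝ))‖ := by
          rw [← hay i, ht3, dist_eq_norm, ← QuotientAddGroup.mk_sub]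
      _ ≤ |a i - t| := norm_addCircle_le _
      _ ≤ 1 / N := by
          have hdiff : ((j i : ℝ) + 1) / N - (j i : ℝ) / N = 1 / N := by ring
          rw [abs_le]
          constructor <;> linarith
      _ ≤ Real.sqrt k / N := by gcongr
end

section
/- For every δ > 0, the torus (ℝ/ℤ)^k contains a closed subgroup isomorphic as a topological group to the circle ℝ/ℤ that is a δ-net in (ℝ/ℤ)^k. -/
open Finset

/-- For every `δ > 0`, the torus `(ℝ/ℤ)^k` contains a closed subgroup topologically
isomorphic to the circle `ℝ/ℤ` which is a `δ`-net. -/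
theorem circle_subgroup_net (k : ℕ) (hk : 0 < k) (δ : ℝ) (hδ : 0 < δ) :
    ∃ H : AddSubgroup (Fin k → AddCircle (1 : ℝ)),
      IsClosed (H : Set (Fin k → AddCircle (1 : ℝ))) ∧
      (∃ e : AddCircle (1 : ℝ) ≃+ H, Continuous e ∧ Continuous e.symm) ∧
      (∀ y : Fin k → AddCircle (1 : ℝ), ∃ h ∈ H, dist y h ≤ δ) := by
  haveI : Fact ((0:ℝ) < 1) := ⟨one_pos⟩
  -- choose N with 1 ≤ N and 1/N ≤ δ
  obtain ⟨N, hN1, hNδ⟩ : ∃ N : ℕ, 1 ≤ N ∧ 1 / (N : ℝ) ≤ δ := by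
    refine ⟨max 1 ⌈δ⁻¹⌉₊, le_max_left _ _, ?_⟩
    have h1 : δ⁻¹ ≤ ((max 1 ⌈δ⁻¹⌉₊ : ℕ) : ℝ) :=
      (Nat.le_ceil _).trans (by exact_mod_cast le_max_right 1 ⌈δ⁻¹⌉₊)
    calc 1 / ((max 1 ⌈δ⁻¹⌉₊ : ℕ) : ℝ) ≤ 1 / δ⁻¹ :=
          one_div_le_one_div_of_le (by positivity) h1
      _ = δ := by rw [one_div, inv_inv]
  have hN0 : (0:ℝ) < (N:ℝ) := by exact_mod_cast hN1
  -- the winding homomorphism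
  set f : AddCircle (1:ℝ) →+ (Fin k → AddCircle (1:ℝ)) :=
    { toFun := fun t i => (N ^ (i : ℕ)) • t
      map_zero' := by funext i; simp
      map_add' := fun a b => by funext i; simp [smul_add] } with hf
  have hfapp : ∀ t i, f t i = (N ^ (i : ℕ)) • t := fun t i => rfl
  have hfc : Continuous f := continuous_pi fun i => continuous_nsmul _
  have hfi : Function.Injective f := by
    intro a b h
    have h0 := congrFun h ⟨0, hk⟩
    rw [hfapp, hfapp] at h0
    simpa using h0
  refine ⟨f.range, ?_, ?_, ?_⟩
  · have hr : (f.range : Set (Fin k → AddCircle (1:ℝ))) = Set.range f := by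
      ext x; simp [AddMonoidHom.mem_range, Set.mem_range]
    rw [hr]
    exact (isCompact_range hfc).isClosed
  · refine ⟨AddMonoidHom.ofInjective hfi, ?_, ?_⟩
    · exact continuous_induced_rng.2 hfc
    · have hφ : Continuous (AddMonoidHom.ofInjective hfi).toEquiv :=
        continuous_induced_rng.2 hfc
      exact (Continuous.homeoOfEquivCompactToT2 hφ).symm.continuous
  · intro y
    -- lift of y to [0,1)
    set z : ℕ → ℝ := fun i => if h : i < k then ((AddCircle.equivIco 1 0 (y ⟨i, h⟩)) : ℝ) else 0
      with hz
    have hz0 : ∀ i, 0 ≤ z i := by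
      intro i
      rw [hz]
      dsimp only
      by_cases h : i < k
      · rw [dif_pos h]
        have := (AddCircle.equivIco 1 0 (y ⟨i, h⟩)).2.1
        linarith
      · rw [dif_neg h]
    have hz1 : ∀ i, z i < 1 := by
      intro i
      rw [hz]
      dsimp only
      by_cases h : i < k
      · rw [dif_pos h]
        have := (AddCircle.equivIco 1 0 (y ⟨i, h⟩)).2.2
        linarith
      · rw [dif_neg h]; norm_num
    -- digits
    set d : ℕ → ℤ := fun i => ⌊(N:ℝ) * z i⌋ with hd
    have hd0 : ∀ i, (0:ℝ) ≤ (d i : ℝ) := by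
      intro i
      have : (0:ℤ) ≤ d i := Int.floor_nonneg.2 (mul_nonneg hN0.le (hz0 i))
      exact_mod_cast this
    have hdN : ∀ i, (d i : ℝ) ≤ (N:ℝ) - 1 := by
      intro i
      have h1 : (N:ℝ) * z i < (N:ℝ) * 1 := mul_lt_mul_of_pos_left (hz1 i) hN0
      have h2 : d i < (N:ℤ) := Int.floor_lt.2 (by push_cast; linarith)
      have h3 : d i ≤ (N:ℤ) - 1 := by omega
      have h4 : ((d i : ℤ) : ℝ) ≤ (((N:ℤ) - 1 : ℤ) : ℝ) := by exact_mod_cast h3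
      push_cast at h4
      linarith
    have hzd : ∀ i, (d i : ℝ) / N ≤ z i ∧ z i < ((d i : ℝ) + 1) / N := by
      intro i
      constructor
      · rw [div_le_iff₀ hN0]
        have hfl : ((d i : ℤ) : ℝ) ≤ (N:ℝ) * z i := Int.floor_le ((N:ℝ) * z i)
        linarith
      · rw [lt_div_iff₀ hN0]
        have hfl : (N:ℝ) * z i < ((d i : ℤ) : ℝ) + 1 := Int.lt_floor_add_one ((N:ℝ) * z i)
        linarith
    -- the approximating point
    set tr : ℝ := ∑ i ∈ range k, (d i : ℝ) / (N:ℝ) ^ (i + 1) with htr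
    refine ⟨f ((tr : ℝ) : AddCircle (1:ℝ)), ⟨_, rfl⟩, ?_⟩
    rw [dist_pi_le_iff hδ.le]
    intro j
    set jn : ℕ := (j : ℕ) with hjn
    have hjk : jn < k := j.2
    have hNpow : ∀ m : ℕ, (0:ℝ) < (N:ℝ) ^ m := fun m => pow_pos hN0 m
    -- the residual sum
    set r : ℝ := ∑ i ∈ Ico jn k, (d i : ℝ) / (N:ℝ) ^ (i + 1 - jn) with hr
    set M : ℤ := ∑ i ∈ range jn, d i * (N:ℤ) ^ (jn - i - 1) with hM
    have hsplit : (N:ℝ) ^ jn * tr = (M : ℝ) + r := by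
      rw [htr, ← Finset.sum_range_add_sum_Ico _ hjk.le, mul_add, hM, hr]
      congr 1
      · push_cast
        rw [Finset.mul_sum]
        refine Finset.sum_congr rfl ?_
        intro i hi
        have hij : i < jn := Finset.mem_range.1 hi
        have hpow : (N:ℝ) ^ jn = (N:ℝ) ^ (i + 1) * (N:ℝ) ^ (jn - i - 1) := by
          rw [← pow_add]; congr 1; omega
        rw [hpow]
        field_simp
      · rw [Finset.mul_sum]
        refine Finset.sum_congr rfl ?_
        intro i hi
        have hij : jn ≤ i := (Finset.mem_Ico.1 hi).1
        have hpow : (N:ℝ) ^ (i + 1) = (N:ℝ) ^ (i + 1 - jn) * (N:ℝ) ^ jn := by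
          rw [← pow_add]; congr 1; omega
        rw [hpow]
        field_simp
    -- identify the j-th coordinate
    have hcomp : f ((tr : ℝ) : AddCircle (1:ℝ)) j = ((r : ℝ) : AddCircle (1:ℝ)) := by
      rw [hfapp]
      have h1 : (N ^ jn) • ((tr : ℝ) : AddCircle (1:ℝ)) =
          (((N:ℝ) ^ jn * tr : ℝ) : AddCircle (1:ℝ)) := by
        have := map_nsmul (QuotientAddGroup.mk' (AddSubgroup.zmultiples (1:ℝ))) (N ^ jn) tr
        simpa [nsmul_eq_mul] using this.symm
      rw [h1, hsplit]
      rw [QuotientAddGroup.eq_iff_sub_mem]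
      simp only [add_sub_cancel_right]
      exact ⟨M, by simp⟩
    -- y j as a coset
    have hyz : y j = ((z jn : ℝ) : AddCircle (1:ℝ)) := by
      rw [hz]
      dsimp only
      rw [dif_pos hjk]
      have : (⟨jn, hjk⟩ : Fin k) = j := by ext; rfl
      rw [this]
      exact ((AddCircle.equivIco 1 0).symm_apply_apply (y j)).symm
    -- bounds on r
    have hrsplit : r = (d jn : ℝ) / N + ∑ i ∈ Ico (jn + 1) k, (d i : ℝ) / (N:ℝ) ^ (i + 1 - jn) := by
      rw [hr, Finset.sum_eq_sum_Ico_succ_bot hjk]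
      have he1 : jn + 1 - jn = 1 := by omega
      rw [he1, pow_one]
    have htail0 : 0 ≤ ∑ i ∈ Ico (jn + 1) k, (d i : ℝ) / (N:ℝ) ^ (i + 1 - jn) :=
      Finset.sum_nonneg fun i _ => div_nonneg (hd0 i) (hNpow _).le
    have htail1 : ∑ i ∈ Ico (jn + 1) k, (d i : ℝ) / (N:ℝ) ^ (i + 1 - jn) ≤ 1 / N := by
      have step1 : ∑ i ∈ Ico (jn + 1) k, (d i : ℝ) / (N:ℝ) ^ (i + 1 - jn) ≤
          ∑ i ∈ Ico (jn + 1) k, ((N:ℝ) - 1) / (N:ℝ) ^ (i + 1 - jn) := by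
        refine Finset.sum_le_sum fun i _ => ?_
        exact div_le_div_of_nonneg_right (hdN i) (hNpow _).le
      have step2 : ∑ i ∈ Ico (jn + 1) k, ((N:ℝ) - 1) / (N:ℝ) ^ (i + 1 - jn) =
          ∑ l ∈ range (k - (jn + 1)), (1 / (N:ℝ) ^ (l + 1) - 1 / (N:ℝ) ^ (l + 1 + 1)) := by
        rw [Finset.sum_Ico_eq_sum_range]
        refine Finset.sum_congr rfl ?_
        intro l _
        have he : jn + 1 + l + 1 - jn = l + 2 := by omega
        rw [he]
        have h1 : (N:ℝ) ^ (l + 1) ≠ 0 := (hNpow _).ne'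
        have h2 : (N:ℝ) ^ (l + 2) ≠ 0 := (hNpow _).ne'
        field_simp
        ring
      rw [step2] at step1
      have step3 : ∑ l ∈ range (k - (jn + 1)), (1 / (N:ℝ) ^ (l + 1) - 1 / (N:ℝ) ^ (l + 1 + 1)) =
          1 / (N:ℝ) ^ (0 + 1) - 1 / (N:ℝ) ^ (k - (jn + 1) + 1) := by
        exact Finset.sum_range_sub' (fun l => 1 / (N:ℝ) ^ (l + 1)) _
      rw [step3] at step1
      have : (0:ℝ) < 1 / (N:ℝ) ^ (k - (jn + 1) + 1) := by positivity
      calc ∑ i ∈ Ico (jn + 1) k, (d i : ℝ) / (N:ℝ) ^ (i + 1 - jn) ≤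
          1 / (N:ℝ) ^ (0 + 1) - 1 / (N:ℝ) ^ (k - (jn + 1) + 1) := step1
        _ ≤ 1 / (N:ℝ) ^ (0 + 1) := by linarith
        _ = 1 / N := by norm_num
    -- Lipschitz bound for the quotient map
    have key : ∀ a b : ℝ, dist ((a : AddCircle (1:ℝ))) ((b : AddCircle (1:ℝ))) ≤ |a - b| := by
      intro a b
      rw [dist_eq_norm]
      rw [← QuotientAddGroup.mk_sub, ← Real.norm_eq_abs]
      exact QuotientAddGroup.norm_mk_le_norm
    -- conclude
    have hzj := hzd jn
    have hub : r ≤ (d jn : ℝ) / N + 1 / N := by rw [hrsplit]; linarith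
    have hlb : (d jn : ℝ) / N ≤ r := by rw [hrsplit]; linarith
    have hzu : z jn < (d jn : ℝ) / N + 1 / N := by
      have h6 := hzj.2
      rw [add_div] at h6
      exact h6
    have hzr : |z jn - r| ≤ 1 / N := by
      rw [abs_le]
      constructor <;> [skip; skip] <;> linarith [hzj.1]
    calc dist (y j) (f ((tr : ℝ) : AddCircle (1:ℝ)) j)
        = dist ((z jn : ℝ) : AddCircle (1:ℝ)) ((r : ℝ) : AddCircle (1:ℝ)) := by
          rw [hyz, hcomp]
      _ ≤ |z jn - r| := key _ _
      _ ≤ 1 / N := hzr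
      _ ≤ δ := hNδ
end
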